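/- Invariance of the probability simplex for the 3-state model: if u(t) ≥ 0 for all t, θ1, θ2, θ3 > 0, and (x1, x2, x3) solves the 3-state opsin ODE with initial condition in the simplex {x ∈ ℝ³ : xi ≥ 0, x1+x2+x3 = 1}, then the solution remains in the simplex for all t ≥ 0. -/

import Mathlib

set_option maxHeartbeats 1000000

open Set Filter Topology

/-- If `y` has a derivative `d` at `t0 > 0` and `y t0` is a strict minimum over `[0, t0)`,
then `d ≤ 0`. -/
lemma deriv_le_zero_of_left_min (y : ℝ → ℝ) (t0 d : ℝ) (ht0 : 0 < t0)
    (hy : HasDerivAt y d t0) (hmin : ∀ s, 0 ≤ s → s < t0 → y t0 < y s) : d ≤ 0 := by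
  have hclos : t0 ∈ closure (Set.Ico (0:ℝ) t0) := by
    rw [closure_Ico ht0.ne]; exact ⟨ht0.le, le_rfl⟩
  haveI hnb : (𝓝[Set.Ico (0:ℝ) t0] t0).NeBot := mem_closure_iff_nhdsWithin_neBot.1 hclos
  have hd : HasDerivWithinAt y d (Set.Ico 0 t0) t0 := hy.hasDerivWithinAt
  rw [hasDerivWithinAt_iff_tendsto_slope] at hd
  have hset : Set.Ico (0:ℝ) t0 \ {t0} = Set.Ico 0 t0 :=
    Set.diff_singleton_eq_self (by simp)
  rw [hset] at hd
  refine le_of_tendsto hd ?_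
  filter_upwards [self_mem_nhdsWithin] with s hs
  have h1 : y t0 < y s := hmin s hs.1 hs.2
  rw [slope_def_field]
  exact (div_nonpos_iff.2 (Or.inl ⟨by linarith, by linarith [hs.2]⟩))

/-- Key positivity estimate for the perturbed 3-state system. -/
lemma three_state_pos_aux
    (u x1 x2 x3 : ℝ → ℝ) (θ1 θ2 θ3 M C T ε : ℝ)
    (hε : 0 < ε)
    (hθ1 : 0 < θ1) (hθ2 : 0 < θ2) (hθ3 : 0 < θ3)
    (hu0 : ∀ t, 0 ≤ u t) (hM : ∀ s ∈ Set.Icc (0:ℝ) T, u s ≤ M)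
    (hC1 : θ1 * M < C) (hC2 : θ2 < C) (hC3 : θ3 * M < C)
    (h1 : ∀ t, 0 ≤ t → HasDerivAt x1 (θ1 * u t * x3 t - θ2 * x1 t) t)
    (h2 : ∀ t, 0 ≤ t → HasDerivAt x2 (θ2 * x1 t - θ3 * u t * x2 t) t)
    (h3 : ∀ t, 0 ≤ t → HasDerivAt x3 (-(θ1 * u t * x3 t) + θ3 * u t * x2 t) t)
    (h01 : 0 ≤ x1 0) (h02 : 0 ≤ x2 0) (h03 : 0 ≤ x3 0) :
    ∀ s ∈ Set.Icc (0:ℝ) T,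
      0 < min (x1 s) (min (x2 s) (x3 s)) + ε * Real.exp (C * s) := by
  by_contra hcon
  push_neg at hcon
  obtain ⟨s0, hs0, hg0⟩ := hcon
  set g : ℝ → ℝ := fun s => min (x1 s) (min (x2 s) (x3 s)) + ε * Real.exp (C * s) with hgdef
  set S : Set ℝ := Set.Icc 0 T ∩ g ⁻¹' Set.Iic 0 with hSdef
  have hc1 : ContinuousOn x1 (Set.Icc 0 T) :=
    fun s hs => ((h1 s hs.1).continuousAt).continuousWithinAt
  have hc2 : ContinuousOn x2 (Set.Icc 0 T) :=
    fun s hs => ((h2 s hs.1).continuousAt).continuousWithinAt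
  have hc3 : ContinuousOn x3 (Set.Icc 0 T) :=
    fun s hs => ((h3 s hs.1).continuousAt).continuousWithinAt
  have hE : Continuous fun s : ℝ => ε * Real.exp (C * s) := by continuity
  have hgc : ContinuousOn g (Set.Icc 0 T) :=
    (hc1.inf (hc2.inf hc3)).add hE.continuousOn
  have hScl : IsClosed S := hgc.preimage_isClosed_of_isClosed isClosed_Icc isClosed_Iic
  have hSne : S.Nonempty := ⟨s0, hs0, hg0⟩
  have hSbd : BddBelow S := ⟨0, fun s hs => hs.1.1⟩
  set t0 := sInf S with ht0def
  have ht0S : t0 ∈ S := hScl.csInf_mem hSne hSbd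
  have ht0T : t0 ∈ Set.Icc (0:ℝ) T := ht0S.1
  have ht0le : g t0 ≤ 0 := ht0S.2
  have hEpos : ∀ s : ℝ, 0 < ε * Real.exp (C * s) := fun s => mul_pos hε (Real.exp_pos _)
  have hg0pos : 0 < g 0 := by
    have hmin0 : 0 ≤ min (x1 0) (min (x2 0) (x3 0)) := le_min h01 (le_min h02 h03)
    have := hEpos 0
    simp only [hgdef]
    linarith
  have ht0pos : 0 < t0 := by
    rcases ht0T.1.lt_or_eq with h | h
    · exact h
    · exact absurd ht0le (by rw [← h]; exact not_le.2 hg0pos)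
  have hbefore : ∀ s, 0 ≤ s → s < t0 → 0 < g s := by
    intro s hs hst
    by_contra hgs
    push_neg at hgs
    have hsS : s ∈ S := ⟨⟨hs, hst.le.trans ht0T.2⟩, hgs⟩
    exact absurd (csInf_le hSbd hsS) (not_le.2 hst)
  have hgt0 : g t0 = 0 := by
    have hcont : ContinuousAt g t0 := by
      have hm : ContinuousAt (fun s => min (x1 s) (min (x2 s) (x3 s))) t0 :=
        (h1 t0 ht0T.1).continuousAt.inf
          ((h2 t0 ht0T.1).continuousAt.inf (h3 t0 ht0T.1).continuousAt)
      exact hm.add hE.continuousAt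
    have htd : Filter.Tendsto g (𝓝[<] t0) (𝓝 (g t0)) :=
      (hcont.tendsto).mono_left nhdsWithin_le_nhds
    have hev : ∀ᶠ s in 𝓝[<] t0, 0 ≤ g s := by
      filter_upwards [Ioo_mem_nhdsLT ht0pos] with s hs
      exact (hbefore s hs.1.le hs.2).le
    have hge := ge_of_tendsto htd hev
    linarith
  have hminx : min (x1 t0) (min (x2 t0) (x3 t0)) = -(ε * Real.exp (C * t0)) := by
    have : min (x1 t0) (min (x2 t0) (x3 t0)) + ε * Real.exp (C * t0) = 0 := hgt0
    linarith
  have hb1 : -(ε * Real.exp (C * t0)) ≤ x1 t0 := by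
    rw [← hminx]; exact min_le_left _ _
  have hb2 : -(ε * Real.exp (C * t0)) ≤ x2 t0 := by
    rw [← hminx]; exact le_trans (min_le_right _ _) (min_le_left _ _)
  have hb3 : -(ε * Real.exp (C * t0)) ≤ x3 t0 := by
    rw [← hminx]; exact le_trans (min_le_right _ _) (min_le_right _ _)
  have hEy : HasDerivAt (fun s => ε * Real.exp (C * s)) (ε * (C * Real.exp (C * t0))) t0 := by
    have hlin : HasDerivAt (fun s : ℝ => C * s) C t0 := by
      simpa using (hasDerivAt_id t0).const_mul C
    have hexp : HasDerivAt (fun s : ℝ => Real.exp (C * s)) (Real.exp (C * t0) * C) t0 := by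
      exact (Real.hasDerivAt_exp (C * t0)).comp t0 hlin
    have := hexp.const_mul ε
    rw [show ε * (C * Real.exp (C * t0)) = ε * (Real.exp (C * t0) * C) by ring]
    exact this
  have huM : u t0 ≤ M := hM t0 ht0T
  have hu0' : 0 ≤ u t0 := hu0 t0
  have hEt := hEpos t0
  -- which component attains the minimum?
  rcases le_or_gt (x1 t0) (min (x2 t0) (x3 t0)) with hle | hlt
  · -- x1 attains the min
    have hx1 : x1 t0 = -(ε * Real.exp (C * t0)) := by
      rw [← hminx]; exact (min_eq_left hle).symm
    have hd := (h1 t0 ht0T.1).add hEy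
    have hmin' : ∀ s, 0 ≤ s → s < t0 →
        x1 t0 + ε * Real.exp (C * t0) < x1 s + ε * Real.exp (C * s) := by
      intro s hs hst
      have hgs := hbefore s hs hst
      simp only [hgdef] at hgs
      have hmle : min (x1 s) (min (x2 s) (x3 s)) ≤ x1 s := min_le_left _ _
      rw [hx1]; linarith
    have hd0 := deriv_le_zero_of_left_min _ t0 _ ht0pos hd hmin'
    nlinarith [mul_nonneg (mul_nonneg hθ1.le hu0') (by linarith : (0:ℝ) ≤ x3 t0 + ε * Real.exp (C * t0)),
      mul_nonneg (sub_nonneg.2 huM) (mul_pos hθ1 hEt).le,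
      mul_pos (sub_pos.2 hC1) hEt, mul_pos hθ2 hEt]
  · have hmin23 : min (x2 t0) (x3 t0) = -(ε * Real.exp (C * t0)) := by
      rw [← hminx]; exact (min_eq_right hlt.le).symm
    rcases le_or_gt (x2 t0) (x3 t0) with hle2 | hlt2
    · -- x2 attains the min
      have hx2 : x2 t0 = -(ε * Real.exp (C * t0)) := by
        rw [← hmin23]; exact (min_eq_left hle2).symm
      have hd := (h2 t0 ht0T.1).add hEy
      have hmin' : ∀ s, 0 ≤ s → s < t0 →
          x2 t0 + ε * Real.exp (C * t0) < x2 s + ε * Real.exp (C * s) := by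
        intro s hs hst
        have hgs := hbefore s hs hst
        simp only [hgdef] at hgs
        have hmle : min (x1 s) (min (x2 s) (x3 s)) ≤ x2 s :=
          le_trans (min_le_right _ _) (min_le_left _ _)
        rw [hx2]; linarith
      have hd0 := deriv_le_zero_of_left_min _ t0 _ ht0pos hd hmin'
      nlinarith [mul_nonneg (mul_nonneg hθ3.le hu0') hEt.le,
        mul_nonneg hθ2.le (by linarith : (0:ℝ) ≤ x1 t0 + ε * Real.exp (C * t0)),
        mul_pos (sub_pos.2 hC2) hEt]
    · -- x3 attains the min
      have hx3 : x3 t0 = -(ε * Real.exp (C * t0)) := by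
        rw [← hmin23]; exact (min_eq_right hlt2.le).symm
      have hd := (h3 t0 ht0T.1).add hEy
      have hmin' : ∀ s, 0 ≤ s → s < t0 →
          x3 t0 + ε * Real.exp (C * t0) < x3 s + ε * Real.exp (C * s) := by
        intro s hs hst
        have hgs := hbefore s hs hst
        simp only [hgdef] at hgs
        have hmle : min (x1 s) (min (x2 s) (x3 s)) ≤ x3 s :=
          le_trans (min_le_right _ _) (min_le_right _ _)
        rw [hx3]; linarith
      have hd0 := deriv_le_zero_of_left_min _ t0 _ ht0pos hd hmin'
      nlinarith [mul_nonneg (mul_nonneg hθ1.le hu0') hEt.le,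
        mul_nonneg (mul_nonneg hθ3.le hu0') (by linarith : (0:ℝ) ≤ x2 t0 + ε * Real.exp (C * t0)),
        mul_nonneg (sub_nonneg.2 huM) (mul_pos hθ3 hEt).le,
        mul_pos (sub_pos.2 hC3) hEt]

/-- Invariance of the probability simplex for the 3-state opsin model. -/
theorem three_state_simplex_invariant
    (u x1 x2 x3 : ℝ → ℝ) (θ1 θ2 θ3 : ℝ)
    (hu : Continuous u) (hu0 : ∀ t, 0 ≤ u t)
    (hθ1 : 0 < θ1) (hθ2 : 0 < θ2) (hθ3 : 0 < θ3)
    (h1 : ∀ t, 0 ≤ t → HasDerivAt x1 (θ1 * u t * x3 t - θ2 * x1 t) t)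
    (h2 : ∀ t, 0 ≤ t → HasDerivAt x2 (θ2 * x1 t - θ3 * u t * x2 t) t)
    (h3 : ∀ t, 0 ≤ t → HasDerivAt x3 (-(θ1 * u t * x3 t) + θ3 * u t * x2 t) t)
    (h0 : 0 ≤ x1 0 ∧ 0 ≤ x2 0 ∧ 0 ≤ x3 0 ∧ x1 0 + x2 0 + x3 0 = 1) :
    ∀ t, 0 ≤ t →
      0 ≤ x1 t ∧ 0 ≤ x2 t ∧ 0 ≤ x3 t ∧ x1 t + x2 t + x3 t = 1 := by
  obtain ⟨h01, h02, h03, h0s⟩ := h0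
  intro t ht
  -- the sum is conserved
  have hsum : x1 t + x2 t + x3 t = 1 := by
    have hcont : ContinuousOn (fun s => x1 s + x2 s + x3 s) (Set.Icc 0 t) := fun s hs =>
      (((h1 s hs.1).continuousAt.add (h2 s hs.1).continuousAt).add
        (h3 s hs.1).continuousAt).continuousWithinAt
    have hderiv : ∀ s ∈ Set.Ico (0:ℝ) t,
        HasDerivWithinAt (fun s => x1 s + x2 s + x3 s) 0 (Set.Ici s) s := by
      intro s hs
      have hds : HasDerivAt (fun s => x1 s + x2 s + x3 s)
          ((θ1 * u s * x3 s - θ2 * x1 s) + (θ2 * x1 s - θ3 * u s * x2 s) +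
            (-(θ1 * u s * x3 s) + θ3 * u s * x2 s)) s :=
        ((h1 s hs.1).add (h2 s hs.1)).add (h3 s hs.1)
      have hz : (θ1 * u s * x3 s - θ2 * x1 s) + (θ2 * x1 s - θ3 * u s * x2 s) +
          (-(θ1 * u s * x3 s) + θ3 * u s * x2 s) = 0 := by ring
      rw [hz] at hds
      exact hds.hasDerivWithinAt
    have := constant_of_has_deriv_right_zero hcont hderiv t ⟨ht, le_rfl⟩
    simpa [h0s] using this
  -- nonnegativity
  obtain ⟨sM, hsM, hMmax⟩ :=
    isCompact_Icc.exists_isMaxOn (Set.nonempty_Icc.2 ht) hu.continuousOn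
  set M := u sM with hMdef
  have hM0 : 0 ≤ M := hu0 sM
  have hMb : ∀ s ∈ Set.Icc (0:ℝ) t, u s ≤ M := fun s hs => hMmax hs
  set C : ℝ := θ1 * M + θ2 + θ3 * M + 1 with hCdef
  have hC1 : θ1 * M < C := by nlinarith [mul_nonneg hθ3.le hM0]
  have hC2 : θ2 < C := by nlinarith [mul_nonneg hθ1.le hM0, mul_nonneg hθ3.le hM0]
  have hC3 : θ3 * M < C := by nlinarith [mul_nonneg hθ1.le hM0]
  have key : ∀ ε : ℝ, 0 < ε →
      0 < min (x1 t) (min (x2 t) (x3 t)) + ε * Real.exp (C * t) := by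
    intro ε hε
    exact three_state_pos_aux u x1 x2 x3 θ1 θ2 θ3 M C t ε hε hθ1 hθ2 hθ3 hu0 hMb
      hC1 hC2 hC3 h1 h2 h3 h01 h02 h03 t ⟨ht, le_rfl⟩
  have hmin_nonneg : 0 ≤ min (x1 t) (min (x2 t) (x3 t)) := by
    by_contra h
    push_neg at h
    have hexp : (0:ℝ) < Real.exp (C * t) := Real.exp_pos _
    have hε : 0 < -(min (x1 t) (min (x2 t) (x3 t))) / (2 * Real.exp (C * t)) := by
      apply div_pos (by linarith) (by linarith)
    have hk := key _ hε
    have heq : -(min (x1 t) (min (x2 t) (x3 t))) / (2 * Real.exp (C * t)) * Real.exp (C * t)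
        = -(min (x1 t) (min (x2 t) (x3 t))) / 2 := by
      field_simp
    rw [heq] at hk
    linarith
  refine ⟨?_, ?_, ?_, hsum⟩
  · exact le_trans hmin_nonneg (min_le_left _ _)
  · exact le_trans hmin_nonneg (le_trans (min_le_right _ _) (min_le_left _ _))
  · exact le_trans hmin_nonneg (le_trans (min_le_right _ _) (min_le_right _ _))
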